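/- For the substitution τ_{m,n}: 0 ↦ 0^{m−1}1, 1 ↦ 0^{n−1}1 with 0 < m < n, the associated matrix is M = [[m−1, 1],[n−1, 1]], whose eigenvalues are (m ± √(m² + 4(n−m)))/2; when m < n ≤ 2m the largest eigenvalue is a Pisot number, i.e., the second eigenvalue has absolute value strictly less than 1 while the first is greater than 1. -/
import Mathlib


/-- For the substitution `τ_{m,n} : 0 ↦ 0^{m−1}1, 1 ↦ 0^{n−1}1` with `0 < m < n`,
the associated matrix is `M = [[m−1, 1], [n−1, 1]]`, whose eigenvalues are
`(m ± √(m² + 4(n−m)))/2`; when `n ≤ 2m` the matrix is Pisot: the larger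
eigenvalue exceeds `1` and the other has absolute value less than `1`. -/
theorem substitution_matrix_pisot (m n : ℕ) (hm : 0 < m) (hmn : m < n) :
    let M : Matrix (Fin 2) (Fin 2) ℝ := !![(m : ℝ) - 1, 1; (n : ℝ) - 1, 1]
    let lamPlus : ℝ := ((m : ℝ) + Real.sqrt ((m : ℝ) ^ 2 + 4 * ((n : ℝ) - m))) / 2
    let lamMinus : ℝ := ((m : ℝ) - Real.sqrt ((m : ℝ) ^ 2 + 4 * ((n : ℝ) - m))) / 2
    (M - lamPlus • (1 : Matrix (Fin 2) (Fin 2) ℝ)).det = 0 ∧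
    (M - lamMinus • (1 : Matrix (Fin 2) (Fin 2) ℝ)).det = 0 ∧
    (∀ lam : ℝ, (M - lam • (1 : Matrix (Fin 2) (Fin 2) ℝ)).det = 0 →
      lam = lamPlus ∨ lam = lamMinus) ∧
    (n ≤ 2 * m → 1 < lamPlus ∧ |lamMinus| < 1) := by
  intro M lamPlus lamMinus
  have hm1 : (1 : ℝ) ≤ (m : ℝ) := by exact_mod_cast hm
  have hmn' : (m : ℝ) + 1 ≤ (n : ℝ) := by exact_mod_cast hmn
  have hD : (0 : ℝ) < (m : ℝ) ^ 2 + 4 * ((n : ℝ) - m) := by nlinarith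
  set s : ℝ := Real.sqrt ((m : ℝ) ^ 2 + 4 * ((n : ℝ) - m)) with hs
  have hs0 : 0 ≤ s := Real.sqrt_nonneg _
  have hs2 : s ^ 2 = (m : ℝ) ^ 2 + 4 * ((n : ℝ) - m) := Real.sq_sqrt hD.le
  have hdet : ∀ lam : ℝ,
      (M - lam • (1 : Matrix (Fin 2) (Fin 2) ℝ)).det
        = (lam - lamPlus) * (lam - lamMinus) := by
    intro lam
    have : (M - lam • (1 : Matrix (Fin 2) (Fin 2) ℝ)).det
        = ((m : ℝ) - 1 - lam) * (1 - lam) - ((n : ℝ) - 1) := by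
      simp [M, Matrix.det_fin_two, Matrix.smul_apply, Matrix.one_apply]
    rw [this]
    simp only [lamPlus, lamMinus]
    nlinarith [hs2]
  refine ⟨by rw [hdet]; ring, by rw [hdet]; ring, ?_, ?_⟩
  · intro lam h
    rw [hdet] at h
    rcases mul_eq_zero.mp h with h | h
    · left; linarith
    · right; linarith
  · intro h2m
    have h2m' : (n : ℝ) ≤ 2 * m := by exact_mod_cast h2m
    have hlow : (m : ℝ) - 2 < s ∧ 2 - (m : ℝ) < s := by
      constructor <;> nlinarith [sq_nonneg (s - ((m:ℝ) - 2)), sq_nonneg (s - (2 - (m:ℝ)))]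
    have hhigh : s < (m : ℝ) + 2 := by
      nlinarith [sq_nonneg (s - ((m:ℝ) + 2))]
    constructor
    · simp only [lamPlus]; linarith [hlow.2]
    · rw [abs_lt]
      constructor <;> simp only [lamMinus] <;> [linarith [hhigh]; linarith [hlow.1]]
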